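/- Matrix CUR error bound (Corollary to Theorem 1): Let A ∈ ℂ^{m×n}, let C ∈ ℂ^{m×r} consist of r columns of A and R ∈ ℂ^{r×n} consist of r rows of A, chosen so that the interpolatory decompositions satisfy ‖A − CF_c*‖_F² ≤ q₁ ∑_{k>r} σ_k(A)² and ‖A* − R*F_r*‖_F² ≤ q₂ ∑_{k>r} σ_k(A)² with q₁ = 1 + f²r(n−r) and q₂ = 1 + f²r(m−r). Set U = C† A R†. Then ‖A − CUR‖_F² ≤ (2 + f²r(m+n−2r)) ∑_{k>r} σ_k(A)². -/

import Mathlib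

open Matrix BigOperators

/-- Frobenius norm of a complex matrix. -/
noncomputable def frob {m n : Type*} [Fintype m] [Fintype n] (A : Matrix m n ℂ) : ℝ :=
  Real.sqrt (∑ i, ∑ j, ‖A i j‖ ^ 2)

/-- The column-selection matrix `I(:,p)` built from an index map `p`. -/
def colSel {n r : ℕ} (p : Fin r → Fin n) : Matrix (Fin n) (Fin r) ℂ :=
  Matrix.of fun i j => if i = p j then 1 else 0

/-- `B` is the Moore–Penrose pseudoinverse of `A` (four Penrose conditions). -/
def IsPinv {m n : Type*} [Fintype m] [Fintype n]
    (A : Matrix m n ℂ) (B : Matrix n m ℂ) : Prop :=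
  A * B * A = A ∧ B * A * B = B ∧ (A * B)ᴴ = A * B ∧ (B * A)ᴴ = B * A

noncomputable def frobSq {m n : Type*} [Fintype m] [Fintype n] (A : Matrix m n ℂ) : ℝ :=
  ∑ i, ∑ j, ‖A i j‖ ^ 2

lemma frobSq_nonneg {m n : Type*} [Fintype m] [Fintype n] (A : Matrix m n ℂ) :
    0 ≤ frobSq A := by
  unfold frobSq; positivity

lemma re_conj_mul (z : ℂ) : (star z * z).re = ‖z‖ ^ 2 := by
  rw [Complex.sq_norm]
  simp [Complex.normSq_apply, Complex.mul_re, Complex.star_def]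

lemma frobSq_eq_re_trace {m n : Type*} [Fintype m] [Fintype n] (A : Matrix m n ℂ) :
    frobSq A = (Matrix.trace (Aᴴ * A)).re := by
  unfold frobSq Matrix.trace
  rw [Complex.re_sum, Finset.sum_comm]
  congr 1; ext j
  simp only [Matrix.diag_apply, Matrix.mul_apply, Matrix.conjTranspose_apply,
    Complex.re_sum, re_conj_mul]

lemma frobSq_conjTranspose {m n : Type*} [Fintype m] [Fintype n] (A : Matrix m n ℂ) :
    frobSq Aᴴ = frobSq A := by
  unfold frobSq
  rw [Finset.sum_comm]
  simp [Matrix.conjTranspose_apply]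

lemma frob_sq_eq {m n : Type*} [Fintype m] [Fintype n] (A : Matrix m n ℂ) :
    frob A ^ 2 = frobSq A := by
  unfold frob frobSq
  rw [Real.sq_sqrt]
  positivity

lemma frobSq_add_of_orth {m n : Type*} [Fintype m] [Fintype n]
    (X Z : Matrix m n ℂ) (h : Xᴴ * Z = 0) :
    frobSq (X + Z) = frobSq X + frobSq Z := by
  have hZX : Zᴴ * X = 0 := by
    have := congrArg Matrix.conjTranspose h
    simpa [Matrix.conjTranspose_mul] using this
  rw [frobSq_eq_re_trace, frobSq_eq_re_trace, frobSq_eq_re_trace]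
  have : (X + Z)ᴴ * (X + Z) = Xᴴ * X + Zᴴ * Z := by
    rw [Matrix.conjTranspose_add, Matrix.add_mul, Matrix.mul_add, Matrix.mul_add, h, hZX]
    simp
  rw [this, Matrix.trace_add, Complex.add_re]

lemma frobSq_proj_le {m n : Type*} [Fintype m] [Fintype n]
    {P : Matrix m m ℂ} (hP1 : Pᴴ = P) (hP2 : P * P = P) (Y : Matrix m n ℂ) :
    frobSq (P * Y) ≤ frobSq Y ∧ frobSq (Y - P * Y) ≤ frobSq Y := by
  have horth : (P * Y)ᴴ * (Y - P * Y) = 0 := by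
    rw [Matrix.conjTranspose_mul, hP1, Matrix.mul_sub]
    rw [Matrix.mul_assoc Yᴴ P (P * Y), ← Matrix.mul_assoc P P Y, hP2, ← Matrix.mul_assoc, sub_self]
  have hsum := frobSq_add_of_orth (P * Y) (Y - P * Y) horth
  rw [add_sub_cancel] at hsum
  constructor
  · nlinarith [frobSq_nonneg (Y - P * Y)]
  · nlinarith [frobSq_nonneg (P * Y)]

lemma proj_sub_orth {m n : Type*} [Fintype m] [Fintype n]
    {P : Matrix m m ℂ} (hP1 : Pᴴ = P) (hP2 : P * P = P) (Y W : Matrix m n ℂ) :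
    (Y - P * Y)ᴴ * (P * W) = 0 := by
  rw [Matrix.conjTranspose_sub, Matrix.conjTranspose_mul, hP1, Matrix.sub_mul,
    Matrix.mul_assoc Yᴴ P (P * W), ← Matrix.mul_assoc P P W, hP2, sub_self]

theorem cur_error_bound' {m n r : ℕ}
    (f s : ℝ)
    (A : Matrix (Fin m) (Fin n) ℂ)
    (C : Matrix (Fin m) (Fin r) ℂ)
    (R : Matrix (Fin r) (Fin n) ℂ)
    (Fc : Matrix (Fin n) (Fin r) ℂ)
    (hFc : frob (A - C * Fcᴴ) ^ 2 ≤ (1 + f ^ 2 * r * ((n : ℝ) - r)) * s)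
    (Fr : Matrix (Fin m) (Fin r) ℂ)
    (hFr : frob (Aᴴ - Rᴴ * Frᴴ) ^ 2 ≤ (1 + f ^ 2 * r * ((m : ℝ) - r)) * s)
    (Cd : Matrix (Fin r) (Fin m) ℂ) (hCd : IsPinv C Cd)
    (Rd : Matrix (Fin n) (Fin r) ℂ) (hRd : IsPinv R Rd) :
    frob (A - C * (Cd * A * Rd) * R) ^ 2
      ≤ (2 + f ^ 2 * r * ((m : ℝ) + n - 2 * r)) * s := by
  obtain ⟨hC1, hC2, hC3, hC4⟩ := hCd
  obtain ⟨hR1, hR2, hR3, hR4⟩ := hRd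
  -- projections
  have hP1 : (C * Cd)ᴴ = C * Cd := hC3
  have hP2 : (C * Cd) * (C * Cd) = C * Cd := by rw [← Matrix.mul_assoc, hC1]
  have hQ1 : (Rd * R)ᴴ = Rd * R := hR4
  have hQ2 : (Rd * R) * (Rd * R) = Rd * R := by
    rw [Matrix.mul_assoc Rd R (Rd * R), ← Matrix.mul_assoc R Rd R, hR1]
  -- decomposition
  have hmain : A - C * (Cd * A * Rd) * R
      = (A - C * Cd * A) + C * Cd * (A - A * (Rd * R)) := by
    simp only [Matrix.mul_sub, Matrix.mul_assoc]
    abel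
  have horth : (A - C * Cd * A)ᴴ * (C * Cd * (A - A * (Rd * R))) = 0 := by
    have := proj_sub_orth hP1 hP2 A (A - A * (Rd * R))
    simpa [Matrix.mul_assoc] using this
  rw [frob_sq_eq] at hFc hFr ⊢
  rw [hmain, frobSq_add_of_orth _ _ horth]
  -- bound first term
  have hb1 : frobSq (A - C * Cd * A) ≤ frobSq (A - C * Fcᴴ) := by
    have hXeq : A - C * Cd * A = (A - C * Fcᴴ) - (C * Cd) * (A - C * Fcᴴ) := by
      rw [Matrix.mul_sub, ← Matrix.mul_assoc, hC1]
      abel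
    rw [hXeq]
    exact (frobSq_proj_le hP1 hP2 (A - C * Fcᴴ)).2
  -- bound second term
  have hb2 : frobSq (C * Cd * (A - A * (Rd * R))) ≤ frobSq (Aᴴ - Rᴴ * Frᴴ) := by
    have h1 : frobSq (C * Cd * (A - A * (Rd * R))) ≤ frobSq (A - A * (Rd * R)) :=
      (frobSq_proj_le hP1 hP2 (A - A * (Rd * R))).1
    have h2 : frobSq (A - A * (Rd * R)) = frobSq (Aᴴ - (Rd * R) * Aᴴ) := by
      rw [← frobSq_conjTranspose (A - A * (Rd * R)), Matrix.conjTranspose_sub,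
        Matrix.conjTranspose_mul, hQ1]
    have hQR : (Rd * R) * Rᴴ = Rᴴ := by
      have h3 : R * (Rd * R) = R := by rw [← Matrix.mul_assoc, hR1]
      calc (Rd * R) * Rᴴ = (Rd * R)ᴴ * Rᴴ := by rw [hR4]
        _ = (R * (Rd * R))ᴴ := by rw [← Matrix.conjTranspose_mul]
        _ = Rᴴ := by rw [h3]
    have hYeq : Aᴴ - (Rd * R) * Aᴴ
        = (Aᴴ - Rᴴ * Frᴴ) - (Rd * R) * (Aᴴ - Rᴴ * Frᴴ) := by
      rw [Matrix.mul_sub, ← Matrix.mul_assoc, hQR]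
      abel
    have h4 : frobSq (Aᴴ - (Rd * R) * Aᴴ) ≤ frobSq (Aᴴ - Rᴴ * Frᴴ) := by
      rw [hYeq]
      exact (frobSq_proj_le hQ1 hQ2 (Aᴴ - Rᴴ * Frᴴ)).2
    linarith
  have : frobSq (A - C * Cd * A) + frobSq (C * Cd * (A - A * (Rd * R)))
      ≤ (1 + f ^ 2 * r * ((n : ℝ) - r)) * s + (1 + f ^ 2 * r * ((m : ℝ) - r)) * s := by
    linarith
  calc frobSq (A - C * Cd * A) + frobSq (C * Cd * (A - A * (Rd * R)))
      ≤ (1 + f ^ 2 * r * ((n : ℝ) - r)) * s + (1 + f ^ 2 * r * ((m : ℝ) - r)) * s := this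
    _ = (2 + f ^ 2 * r * ((m : ℝ) + n - 2 * r)) * s := by ring

/-- Matrix CUR error bound: if `C` (columns of `A`) and `R` (rows of `A`) come with
interpolatory decompositions satisfying `‖A − CF_c*‖_F² ≤ (1 + f²r(n−r)) s` and
`‖A* − R*F_r*‖_F² ≤ (1 + f²r(m−r)) s`, where `s = ∑_{k>r} σ_k(A)²` is the tail of the
squared singular values of `A` and `f ≥ 1`, then with `U = C†AR†`,
`‖A − CUR‖_F² ≤ (2 + f²r(m+n−2r)) s`. -/
theorem cur_error_bound {m n r : ℕ} (hrm : r ≤ m) (hrn : r ≤ n)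
    (f s : ℝ) (hf : 1 ≤ f) (hs : 0 ≤ s)
    (A : Matrix (Fin m) (Fin n) ℂ)
    (pc : Fin r → Fin n) (hpc : Function.Injective pc)
    (pr : Fin r → Fin m) (hpr : Function.Injective pr)
    (C : Matrix (Fin m) (Fin r) ℂ) (hC : C = A * colSel pc)
    (R : Matrix (Fin r) (Fin n) ℂ) (hR : R = (colSel pr)ᴴ * A)
    (Fc : Matrix (Fin n) (Fin r) ℂ)
    (hFc : frob (A - C * Fcᴴ) ^ 2 ≤ (1 + f ^ 2 * r * ((n : ℝ) - r)) * s)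
    (Fr : Matrix (Fin m) (Fin r) ℂ)
    (hFr : frob (Aᴴ - Rᴴ * Frᴴ) ^ 2 ≤ (1 + f ^ 2 * r * ((m : ℝ) - r)) * s)
    (Cd : Matrix (Fin r) (Fin m) ℂ) (hCd : IsPinv C Cd)
    (Rd : Matrix (Fin n) (Fin r) ℂ) (hRd : IsPinv R Rd) :
    frob (A - C * (Cd * A * Rd) * R) ^ 2
      ≤ (2 + f ^ 2 * r * ((m : ℝ) + n - 2 * r)) * s :=
  cur_error_bound' f s A C R Fc hFc Fr hFr Cd hCd Rd hRd
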